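/- Under the conformal-block-expansion setup below, for every τ* ≥ 0 and every z₀ ∈ (0,1) there exists a finite constant C (depending only on the expansion data, Δφ, z₀ and τ*) such that for all z, z̄ with 0 < z ≤ z₀ ≤ z̄ < 1 one has ∑_{i ∈ I : τ_i ≥ τ*} p_i · g_i(z, z̄) ≤ C · z^{τ*/2} / (1−z̄)^{Δφ}. -/

import Mathlib

open Set

/-- A single conformal block contribution:
`g_i(z, z̄) = (z z̄)^(τᵢ/2) ∑_{n,m} a^{(i)}_{n,m} z^n z̄^m`. -/
noncomputable def blockFun (τi : ℝ) (coef : ℕ × ℕ → ℝ) (z zb : ℝ) : ℝ :=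
  (z * zb) ^ (τi / 2) * ∑' nm : ℕ × ℕ, coef nm * z ^ nm.1 * zb ^ nm.2

lemma blockFun_nonneg (τi : ℝ) (coef : ℕ × ℕ → ℝ) (hc : ∀ nm, 0 ≤ coef nm)
    {z zb : ℝ} (hz : 0 ≤ z) (hzb : 0 ≤ zb) : 0 ≤ blockFun τi coef z zb :=
  mul_nonneg (Real.rpow_nonneg (mul_nonneg hz hzb) _)
    (tsum_nonneg fun nm => by have := hc nm; positivity)

lemma blockFun_mono (τi : ℝ) (hτi : 0 ≤ τi) (coef : ℕ × ℕ → ℝ) (hc : ∀ nm, 0 ≤ coef nm)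
    {z zb z' zb' : ℝ} (hz : 0 ≤ z) (hzz : z ≤ z') (hzb : 0 ≤ zb) (hzbb : zb ≤ zb')
    (hS' : Summable (fun nm : ℕ × ℕ => coef nm * z' ^ nm.1 * zb' ^ nm.2)) :
    blockFun τi coef z zb ≤ blockFun τi coef z' zb' := by
  have hz' : 0 ≤ z' := hz.trans hzz
  have hzb' : 0 ≤ zb' := hzb.trans hzbb
  have hterm : ∀ nm : ℕ × ℕ,
      coef nm * z ^ nm.1 * zb ^ nm.2 ≤ coef nm * z' ^ nm.1 * zb' ^ nm.2 := by
    intro nm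
    have := hc nm
    gcongr
  have hS : Summable (fun nm : ℕ × ℕ => coef nm * z ^ nm.1 * zb ^ nm.2) :=
    hS'.of_nonneg_of_le (fun nm => by have := hc nm; positivity) hterm
  unfold blockFun
  apply mul_le_mul
  · exact Real.rpow_le_rpow (mul_nonneg hz hzb) (mul_le_mul hzz hzbb hzb hz') (by positivity)
  · exact Summable.tsum_le_tsum hterm hS hS'
  · exact tsum_nonneg fun nm => by have := hc nm; positivity
  · exact Real.rpow_nonneg (mul_nonneg hz' hzb') _

theorem stmt2 {I : Type*} [Countable I] (Δφ : ℝ) (hΔ : 0 < Δφ)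
    (p τ : I → ℝ) (coef : I → ℕ × ℕ → ℝ)
    (hp : ∀ i, 0 ≤ p i) (hτ : ∀ i, 0 ≤ τ i) (hcoef : ∀ i nm, 0 ≤ coef i nm)
    (hinner : ∀ i, ∀ z zb : ℝ, 0 ≤ z → z < 1 → 0 ≤ zb → zb < 1 →
      Summable (fun nm : ℕ × ℕ => coef i nm * z ^ nm.1 * zb ^ nm.2))
    (hsum : ∀ z zb : ℝ, z ∈ Ioo (0:ℝ) 1 → zb ∈ Ioo (0:ℝ) 1 →
      Summable (fun i => p i * blockFun (τ i) (coef i) z zb))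
    (hcross : ∀ z zb : ℝ, z ∈ Ioo (0:ℝ) 1 → zb ∈ Ioo (0:ℝ) 1 →
      1 + ∑' i, p i * blockFun (τ i) (coef i) z zb =
        (z * zb / ((1 - z) * (1 - zb))) ^ Δφ *
          (1 + ∑' i, p i * blockFun (τ i) (coef i) (1 - z) (1 - zb)))
    (τstar : ℝ) (hτstar : 0 ≤ τstar) (z₀ : ℝ) (hz₀ : z₀ ∈ Ioo (0:ℝ) 1) :
    ∃ C : ℝ, ∀ z zb : ℝ, 0 < z → z ≤ z₀ → z₀ ≤ zb → zb < 1 →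
      (∑' i : {j : I // τstar ≤ τ j}, p i.1 * blockFun (τ i.1) (coef i.1) z zb) ≤
        C * z ^ (τstar / 2) / (1 - zb) ^ Δφ := by
  obtain ⟨hz₀0, hz₀1⟩ := hz₀
  set c := τstar / 2 with hcdef
  set K := 1 + ∑' i, p i * blockFun (τ i) (coef i) (1 - z₀) (1 - z₀) with hKdef
  have hBnn : 0 ≤ ∑' i, p i * blockFun (τ i) (coef i) (1 - z₀) (1 - z₀) :=
    tsum_nonneg fun i => mul_nonneg (hp i)
      (blockFun_nonneg _ _ (hcoef i) (by linarith) (by linarith))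
  have hK1 : (1:ℝ) ≤ K := le_add_of_nonneg_right hBnn
  have hK0 : (0:ℝ) ≤ K := by linarith
  refine ⟨K / (z₀ ^ c * (1 - z₀) ^ Δφ), ?_⟩
  intro z zb hz hzz₀ hz₀zb hzb1
  have hz1 : z < 1 := lt_of_le_of_lt hzz₀ hz₀1
  have hzb0 : 0 < zb := lt_of_lt_of_le hz₀0 hz₀zb
  have hsum_zzb := hsum z zb ⟨hz, hz1⟩ ⟨hzb0, hzb1⟩
  have hsum_z₀zb := hsum z₀ zb ⟨hz₀0, hz₀1⟩ ⟨hzb0, hzb1⟩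
  have hsum_cross := hsum (1 - z₀) (1 - zb) ⟨by linarith, by linarith⟩ ⟨by linarith, by linarith⟩
  have hsum_cross0 := hsum (1 - z₀) (1 - z₀) ⟨by linarith, by linarith⟩ ⟨by linarith, by linarith⟩
  have hdiv0 : 0 < z / z₀ := div_pos hz hz₀0
  have hdiv1 : z / z₀ ≤ 1 := (div_le_one hz₀0).mpr hzz₀
  -- per-term bound
  have hA : ∀ i : {j : I // τstar ≤ τ j},
      p i.1 * blockFun (τ i.1) (coef i.1) z zb ≤
        (z / z₀) ^ c * (p i.1 * blockFun (τ i.1) (coef i.1) z₀ zb) := by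
    rintro ⟨i, hi⟩
    dsimp only
    have hS0 : Summable (fun nm : ℕ × ℕ => coef i nm * z₀ ^ nm.1 * zb ^ nm.2) :=
      hinner i z₀ zb hz₀0.le hz₀1 hzb0.le hzb1
    have hterm : ∀ nm : ℕ × ℕ,
        coef i nm * z ^ nm.1 * zb ^ nm.2 ≤ coef i nm * z₀ ^ nm.1 * zb ^ nm.2 := by
      intro nm
      have := hcoef i nm
      gcongr
    have hS : Summable (fun nm : ℕ × ℕ => coef i nm * z ^ nm.1 * zb ^ nm.2) :=
      hS0.of_nonneg_of_le (fun nm => by have := hcoef i nm; positivity) hterm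
    have hSle := Summable.tsum_le_tsum hterm hS hS0
    have hrw : z * zb = (z / z₀) * (z₀ * zb) := by field_simp
    have hpow : (z * zb) ^ (τ i / 2) ≤ (z / z₀) ^ c * (z₀ * zb) ^ (τ i / 2) := by
      rw [hrw, Real.mul_rpow hdiv0.le (by positivity)]
      exact mul_le_mul_of_nonneg_right
        (Real.rpow_le_rpow_of_exponent_ge hdiv0 hdiv1 (by rw [hcdef]; linarith))
        (Real.rpow_nonneg (by positivity) _)
    unfold blockFun
    calc p i * ((z * zb) ^ (τ i / 2) * ∑' nm : ℕ × ℕ, coef i nm * z ^ nm.1 * zb ^ nm.2)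
        ≤ p i * (((z / z₀) ^ c * (z₀ * zb) ^ (τ i / 2)) *
            ∑' nm : ℕ × ℕ, coef i nm * z₀ ^ nm.1 * zb ^ nm.2) := by
          refine mul_le_mul_of_nonneg_left ?_ (hp i)
          exact mul_le_mul hpow hSle
            (tsum_nonneg fun nm => by have := hcoef i nm; positivity) (by positivity)
      _ = (z / z₀) ^ c * (p i * ((z₀ * zb) ^ (τ i / 2) *
            ∑' nm : ℕ × ℕ, coef i nm * z₀ ^ nm.1 * zb ^ nm.2)) := by ring
  have hsub1 : Summable (fun i : {j : I // τstar ≤ τ j} =>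
      p i.1 * blockFun (τ i.1) (coef i.1) z zb) := hsum_zzb.subtype _
  have hsub2 : Summable (fun i : {j : I // τstar ≤ τ j} =>
      (z / z₀) ^ c * (p i.1 * blockFun (τ i.1) (coef i.1) z₀ zb)) :=
    (hsum_z₀zb.subtype _).mul_left _
  have hBle : ∑' i, p i * blockFun (τ i) (coef i) (1 - z₀) (1 - zb) ≤
      ∑' i, p i * blockFun (τ i) (coef i) (1 - z₀) (1 - z₀) := by
    refine Summable.tsum_le_tsum (fun i => ?_) hsum_cross hsum_cross0
    refine mul_le_mul_of_nonneg_left ?_ (hp i)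
    exact blockFun_mono _ (hτ i) _ (hcoef i) (by linarith) le_rfl (by linarith) (by linarith)
      (hinner i (1 - z₀) (1 - z₀) (by linarith) (by linarith) (by linarith) (by linarith))
  calc (∑' i : {j : I // τstar ≤ τ j}, p i.1 * blockFun (τ i.1) (coef i.1) z zb)
      ≤ ∑' i : {j : I // τstar ≤ τ j},
          (z / z₀) ^ c * (p i.1 * blockFun (τ i.1) (coef i.1) z₀ zb) :=
        Summable.tsum_le_tsum hA hsub1 hsub2
    _ = (z / z₀) ^ c * ∑' i : {j : I // τstar ≤ τ j},
          p i.1 * blockFun (τ i.1) (coef i.1) z₀ zb := tsum_mul_left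
    _ ≤ (z / z₀) ^ c * ∑' i, p i * blockFun (τ i) (coef i) z₀ zb := by
        refine mul_le_mul_of_nonneg_left ?_ (Real.rpow_nonneg hdiv0.le _)
        exact Summable.tsum_le_tsum_of_inj _ Subtype.val_injective
          (fun i _ => mul_nonneg (hp i)
            (blockFun_nonneg _ _ (hcoef i) hz₀0.le hzb0.le))
          (fun i => le_refl _) (hsum_z₀zb.subtype _) hsum_z₀zb
    _ ≤ (z / z₀) ^ c * (1 + ∑' i, p i * blockFun (τ i) (coef i) z₀ zb) := by
        refine mul_le_mul_of_nonneg_left ?_ (Real.rpow_nonneg hdiv0.le _)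
        linarith
    _ = (z / z₀) ^ c * ((z₀ * zb / ((1 - z₀) * (1 - zb))) ^ Δφ *
          (1 + ∑' i, p i * blockFun (τ i) (coef i) (1 - z₀) (1 - zb))) := by
        rw [hcross z₀ zb ⟨hz₀0, hz₀1⟩ ⟨hzb0, hzb1⟩]
    _ ≤ (z / z₀) ^ c * ((z₀ * zb / ((1 - z₀) * (1 - zb))) ^ Δφ * K) := by
        have h1K : 1 + (∑' i, p i * blockFun (τ i) (coef i) (1 - z₀) (1 - zb)) ≤ K := by
          rw [hKdef]; linarith
        refine mul_le_mul_of_nonneg_left ?_ (Real.rpow_nonneg hdiv0.le _)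
        exact mul_le_mul_of_nonneg_left h1K (Real.rpow_nonneg (div_nonneg (mul_nonneg hz₀0.le hzb0.le) (mul_nonneg (by linarith) (by linarith))) _)
    _ = z ^ c / z₀ ^ c * ((z₀ * zb) ^ Δφ / ((1 - z₀) ^ Δφ * (1 - zb) ^ Δφ) * K) := by
        rw [Real.div_rpow hz.le hz₀0.le,
          Real.div_rpow (mul_nonneg hz₀0.le hzb0.le) (mul_nonneg (by linarith) (by linarith)) Δφ,
          Real.mul_rpow (by linarith : (0:ℝ) ≤ 1 - z₀) (by linarith : (0:ℝ) ≤ 1 - zb)]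
    _ ≤ z ^ c / z₀ ^ c * (1 / ((1 - z₀) ^ Δφ * (1 - zb) ^ Δφ) * K) := by
        have h1 : (z₀ * zb) ^ Δφ ≤ 1 :=
          Real.rpow_le_one (by positivity) (by nlinarith) hΔ.le
        gcongr
    _ = K / (z₀ ^ c * (1 - z₀) ^ Δφ) * z ^ c / (1 - zb) ^ Δφ := by
        have h2 : (0:ℝ) < z₀ ^ c := Real.rpow_pos_of_pos hz₀0 _
        have h3 : (0:ℝ) < (1 - z₀) ^ Δφ := Real.rpow_pos_of_pos (by linarith) _
        have h4 : (0:ℝ) < (1 - zb) ^ Δφ := Real.rpow_pos_of_pos (by linarith) _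
        field_simp
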